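/- Define U : ℝ^{2n+1} → ℝ by U(x,y,t) := ((1 + |x|² + |y|²)² + t²)^{−(Q−2)/4}. Then U is smooth, strictly positive, and there exists a constant c > 0 such that −Δ_H U(ξ) = c · U(ξ)^{(Q+2)/(Q−2)} for every ξ ∈ ℝ^{2n+1}; that is, U solves the CR Yamabe equation −Δ_H u = c u^{2*−1} on the whole Heisenberg group. -/

import Mathlib

open MeasureTheory Filter Topology

noncomputable section

/-- The Heisenberg group `ℍⁿ` as `ℝⁿ × ℝⁿ × ℝ`, points `ξ = (x, y, t)`. -/
abbrev H (n : ℕ) : Type := (Fin n → ℝ) × (Fin n → ℝ) × ℝ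

/-- `Z_j u = ∂_{x_j} u + 2 y_j ∂_t u`. -/
noncomputable def Zx (n : ℕ) (j : Fin n) (u : H n → ℝ) (ξ : H n) : ℝ :=
  fderiv ℝ u ξ (Pi.single j 1, 0, 0) + 2 * ξ.2.1 j * fderiv ℝ u ξ (0, 0, 1)

/-- `Z_{n+j} u = ∂_{y_j} u − 2 x_j ∂_t u`. -/
noncomputable def Zy (n : ℕ) (j : Fin n) (u : H n → ℝ) (ξ : H n) : ℝ :=
  fderiv ℝ u ξ (0, Pi.single j 1, 0) - 2 * ξ.1 j * fderiv ℝ u ξ (0, 0, 1)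

/-- The Kohn Laplacian (sub-Laplacian) `Δ_H u = Σ_{j=1}^{2n} Z_j (Z_j u)`. -/
noncomputable def subLap (n : ℕ) (u : H n → ℝ) (ξ : H n) : ℝ :=
  ∑ j : Fin n, (Zx n j (Zx n j u) ξ + Zy n j (Zy n j u) ξ)

/-- The homogeneous dimension `Q = 2n + 2`. -/
def Qh (n : ℕ) : ℝ := 2 * n + 2

/-- The Jerison–Lee function `U(x,y,t) = ((1 + |x|² + |y|²)² + t²)^{−(Q−2)/4}`. -/
noncomputable def Ustd (n : ℕ) (ξ : H n) : ℝ :=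
  ((1 + ∑ i, ξ.1 i ^ 2 + ∑ i, ξ.2.1 i ^ 2) ^ 2 + ξ.2.2 ^ 2) ^ (-(Qh n - 2) / 4)

namespace JL

variable {n : ℕ}

/-- `ρ = 1 + |x|² + |y|²`. -/
def rr (n : ℕ) (ξ : H n) : ℝ := 1 + ∑ i, ξ.1 i ^ 2 + ∑ i, ξ.2.1 i ^ 2

/-- `w = ρ² + t²`. -/
def ww (n : ℕ) (ξ : H n) : ℝ := rr n ξ ^ 2 + ξ.2.2 ^ 2

lemma one_le_rr (ξ : H n) : 1 ≤ rr n ξ := by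
  have h1 : 0 ≤ ∑ i, ξ.1 i ^ 2 := Finset.sum_nonneg fun i _ => sq_nonneg _
  have h2 : 0 ≤ ∑ i, ξ.2.1 i ^ 2 := Finset.sum_nonneg fun i _ => sq_nonneg _
  unfold rr; linarith

lemma ww_pos (ξ : H n) : 0 < ww n ξ := by
  have h := one_le_rr (n := n) ξ
  have h2 : 0 ≤ ξ.2.2 ^ 2 := sq_nonneg _
  unfold ww
  nlinarith

lemma ww_ne (ξ : H n) : ww n ξ ≠ 0 := (ww_pos ξ).ne'

/-- coordinate CLMs -/
def LX (n : ℕ) (j : Fin n) : H n →L[ℝ] ℝ :=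
  (ContinuousLinearMap.proj j).comp (ContinuousLinearMap.fst ℝ _ _)

def LY (n : ℕ) (j : Fin n) : H n →L[ℝ] ℝ :=
  ((ContinuousLinearMap.proj j).comp (ContinuousLinearMap.fst ℝ _ _)).comp
    (ContinuousLinearMap.snd ℝ _ _)

def LT (n : ℕ) : H n →L[ℝ] ℝ :=
  (ContinuousLinearMap.snd ℝ _ _).comp (ContinuousLinearMap.snd ℝ _ _)

@[simp] lemma LX_apply (j : Fin n) (v : H n) : LX n j v = v.1 j := rfl
@[simp] lemma LY_apply (j : Fin n) (v : H n) : LY n j v = v.2.1 j := rfl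
@[simp] lemma LT_apply (v : H n) : LT n v = v.2.2 := rfl

lemma hX (j : Fin n) (ξ : H n) : HasFDerivAt (fun ξ : H n => ξ.1 j) (LX n j) ξ :=
  (LX n j).hasFDerivAt

lemma hY (j : Fin n) (ξ : H n) : HasFDerivAt (fun ξ : H n => ξ.2.1 j) (LY n j) ξ :=
  (LY n j).hasFDerivAt

lemma hT (ξ : H n) : HasFDerivAt (fun ξ : H n => ξ.2.2) (LT n) ξ :=
  (LT n).hasFDerivAt

def Lrr (n : ℕ) (ξ : H n) : H n →L[ℝ] ℝ :=
  (∑ i, (2 * ξ.1 i) • LX n i) + ∑ i, (2 * ξ.2.1 i) • LY n i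

lemma hrr (ξ : H n) : HasFDerivAt (rr n) (Lrr n ξ) ξ := by
  have h1 : HasFDerivAt (fun ξ : H n => ∑ i, ξ.1 i ^ 2)
      (∑ i, (2 * ξ.1 i) • LX n i) ξ := by
    apply HasFDerivAt.fun_sum
    intro i _
    have heq : (fun ξ : H n => ξ.1 i ^ 2) = fun ξ : H n => ξ.1 i * ξ.1 i := by
      funext ξ; ring
    rw [heq, show (2 * ξ.1 i) • LX n i = ξ.1 i • LX n i + ξ.1 i • LX n i by
      rw [two_mul, add_smul]]
    exact (hX i ξ).mul (hX i ξ)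
  have h2 : HasFDerivAt (fun ξ : H n => ∑ i, ξ.2.1 i ^ 2)
      (∑ i, (2 * ξ.2.1 i) • LY n i) ξ := by
    apply HasFDerivAt.fun_sum
    intro i _
    have heq : (fun ξ : H n => ξ.2.1 i ^ 2) = fun ξ : H n => ξ.2.1 i * ξ.2.1 i := by
      funext ξ; ring
    rw [heq, show (2 * ξ.2.1 i) • LY n i = ξ.2.1 i • LY n i + ξ.2.1 i • LY n i by
      rw [two_mul, add_smul]]
    exact (hY i ξ).mul (hY i ξ)
  exact ((h1.const_add 1).add h2)

def Lww (n : ℕ) (ξ : H n) : H n →L[ℝ] ℝ :=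
  (2 * rr n ξ) • Lrr n ξ + (2 * ξ.2.2) • LT n

lemma hww (ξ : H n) : HasFDerivAt (ww n) (Lww n ξ) ξ := by
  have heq : ww n = fun ξ : H n => rr n ξ * rr n ξ + ξ.2.2 * ξ.2.2 := by
    funext ξ; unfold ww; ring
  rw [heq, show Lww n ξ = (rr n ξ • Lrr n ξ + rr n ξ • Lrr n ξ)
      + (ξ.2.2 • LT n + ξ.2.2 • LT n) by
    unfold Lww; rw [two_mul, two_mul, add_smul, add_smul]]
  exact ((hrr ξ).mul (hrr ξ)).add ((hT ξ).mul (hT ξ))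

@[simp] lemma Lrr_apply (ξ v : H n) :
    Lrr n ξ v = (∑ i, 2 * ξ.1 i * v.1 i) + ∑ i, 2 * ξ.2.1 i * v.2.1 i := by
  simp [Lrr, mul_assoc]

@[simp] lemma Lww_apply (ξ v : H n) :
    Lww n ξ v = 2 * rr n ξ * ((∑ i, 2 * ξ.1 i * v.1 i) + ∑ i, 2 * ξ.2.1 i * v.2.1 i)
      + 2 * ξ.2.2 * v.2.2 := by
  simp [Lww, mul_assoc]

lemma hpow (a : ℝ) (ξ : H n) :
    HasFDerivAt (fun ξ => ww n ξ ^ a) ((a * ww n ξ ^ (a - 1)) • Lww n ξ) ξ :=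
  (hww ξ).rpow_const (Or.inl (ww_ne ξ))

lemma Zx_rpow (a : ℝ) (j : Fin n) (ξ : H n) :
    Zx n j (fun ξ => ww n ξ ^ a) ξ =
      a * ww n ξ ^ (a - 1) * (4 * (rr n ξ * ξ.1 j) + 4 * (ξ.2.1 j * ξ.2.2)) := by
  unfold Zx
  rw [(hpow a ξ).fderiv]
  simp [Pi.single_apply]
  ring

lemma Zy_rpow (a : ℝ) (j : Fin n) (ξ : H n) :
    Zy n j (fun ξ => ww n ξ ^ a) ξ =
      a * ww n ξ ^ (a - 1) * (4 * (rr n ξ * ξ.2.1 j) - 4 * (ξ.1 j * ξ.2.2)) := by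
  unfold Zy
  rw [(hpow a ξ).fderiv]
  simp [Pi.single_apply]
  ring

lemma ZxZx (a : ℝ) (j : Fin n) (ξ : H n) :
    Zx n j (Zx n j (fun ξ => ww n ξ ^ a)) ξ =
      a * ww n ξ ^ (a - 1) * (8 * ξ.1 j ^ 2 + 8 * ξ.2.1 j ^ 2 + 4 * rr n ξ)
      + 16 * (a * (a - 1)) * ww n ξ ^ (a - 1 - 1)
          * (rr n ξ * ξ.1 j + ξ.2.1 j * ξ.2.2) ^ 2 := by
  have hZ : Zx n j (fun ξ => ww n ξ ^ a)
      = fun ξ => a * ww n ξ ^ (a - 1) * (4 * (rr n ξ * ξ.1 j) + 4 * (ξ.2.1 j * ξ.2.2)) :=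
    funext fun ξ => Zx_rpow a j ξ
  rw [hZ]
  unfold Zx
  have h : HasFDerivAt
      (fun ξ : H n => a * ww n ξ ^ (a - 1) * (4 * (rr n ξ * ξ.1 j) + 4 * (ξ.2.1 j * ξ.2.2)))
      ((a * ww n ξ ^ (a - 1)) •
          ((4:ℝ) • (rr n ξ • LX n j + ξ.1 j • Lrr n ξ)
            + (4:ℝ) • (ξ.2.1 j • LT n + ξ.2.2 • LY n j))
        + (4 * (rr n ξ * ξ.1 j) + 4 * (ξ.2.1 j * ξ.2.2)) •
          (a • (((a - 1) * ww n ξ ^ (a - 1 - 1)) • Lww n ξ))) ξ :=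
    ((hpow (a - 1) ξ).const_mul a).mul
      ((((hrr ξ).mul (hX j ξ)).const_mul 4).add (((hY j ξ).mul (hT ξ)).const_mul 4))
  rw [h.fderiv]
  simp [Pi.single_apply]
  ring

lemma ZyZy (a : ℝ) (j : Fin n) (ξ : H n) :
    Zy n j (Zy n j (fun ξ => ww n ξ ^ a)) ξ =
      a * ww n ξ ^ (a - 1) * (8 * ξ.1 j ^ 2 + 8 * ξ.2.1 j ^ 2 + 4 * rr n ξ)
      + 16 * (a * (a - 1)) * ww n ξ ^ (a - 1 - 1)
          * (rr n ξ * ξ.2.1 j - ξ.1 j * ξ.2.2) ^ 2 := by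
  have hZ : Zy n j (fun ξ => ww n ξ ^ a)
      = fun ξ => a * ww n ξ ^ (a - 1) * (4 * (rr n ξ * ξ.2.1 j) - 4 * (ξ.1 j * ξ.2.2)) :=
    funext fun ξ => Zy_rpow a j ξ
  rw [hZ]
  unfold Zy
  have h : HasFDerivAt
      (fun ξ : H n => a * ww n ξ ^ (a - 1) * (4 * (rr n ξ * ξ.2.1 j) - 4 * (ξ.1 j * ξ.2.2)))
      ((a * ww n ξ ^ (a - 1)) •
          ((4:ℝ) • (rr n ξ • LY n j + ξ.2.1 j • Lrr n ξ)
            - (4:ℝ) • (ξ.1 j • LT n + ξ.2.2 • LX n j))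
        + (4 * (rr n ξ * ξ.2.1 j) - 4 * (ξ.1 j * ξ.2.2)) •
          (a • (((a - 1) * ww n ξ ^ (a - 1 - 1)) • Lww n ξ))) ξ :=
    ((hpow (a - 1) ξ).const_mul a).mul
      ((((hrr ξ).mul (hY j ξ)).const_mul 4).sub (((hX j ξ).mul (hT ξ)).const_mul 4))
  rw [h.fderiv]
  simp [Pi.single_apply]
  ring

lemma subLap_rpow (a : ℝ) (ξ : H n) :
    subLap n (fun ξ => ww n ξ ^ a) ξ =
      16 * a ^ 2 * ww n ξ ^ (a - 1) * (rr n ξ - 1)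
      + 8 * a * (n : ℝ) * ww n ξ ^ (a - 1) * rr n ξ := by
  have hsq : ww n ξ ^ (a - 1 - 1) * ww n ξ = ww n ξ ^ (a - 1) := by
    rw [← Real.rpow_add_one (ww_ne ξ) (a - 1 - 1)]
    ring_nf
  have hterm : ∀ j : Fin n,
      Zx n j (Zx n j (fun ξ => ww n ξ ^ a)) ξ + Zy n j (Zy n j (fun ξ => ww n ξ ^ a)) ξ
      = (16 * a * ww n ξ ^ (a - 1) + 16 * (a * (a - 1)) * ww n ξ ^ (a - 1))
          * (ξ.1 j ^ 2 + ξ.2.1 j ^ 2)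
        + 8 * a * ww n ξ ^ (a - 1) * rr n ξ := by
    intro j
    rw [ZxZx a j ξ, ZyZy a j ξ]
    have e : (rr n ξ * ξ.1 j + ξ.2.1 j * ξ.2.2) ^ 2
        + (rr n ξ * ξ.2.1 j - ξ.1 j * ξ.2.2) ^ 2
        = ww n ξ * (ξ.1 j ^ 2 + ξ.2.1 j ^ 2) := by
      unfold ww; ring
    linear_combination (16 * (a * (a - 1)) * ww n ξ ^ (a - 1 - 1)) * e
      + (16 * (a * (a - 1)) * (ξ.1 j ^ 2 + ξ.2.1 j ^ 2)) * hsq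
  unfold subLap
  rw [Finset.sum_congr rfl fun j _ => hterm j]
  rw [Finset.sum_add_distrib, ← Finset.mul_sum, Finset.sum_const, Finset.card_univ,
    Fintype.card_fin, nsmul_eq_mul, Finset.sum_add_distrib]
  have hS : ((∑ j, ξ.1 j ^ 2) + ∑ j, ξ.2.1 j ^ 2) = rr n ξ - 1 := by unfold rr; ring
  rw [hS]
  ring

end JL

/-- `U` is smooth, positive, and solves the CR Yamabe equation
`−Δ_H U = c U^{(Q+2)/(Q−2)}` on all of `ℍⁿ`, for some constant `c > 0`. -/
theorem jerison_lee_solves_CR_yamabe (n : ℕ) (hn : 1 ≤ n) :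
    ContDiff ℝ (⊤ : ℕ∞) (Ustd n) ∧ (∀ ξ : H n, 0 < Ustd n ξ) ∧
    ∃ c : ℝ, 0 < c ∧ ∀ ξ : H n,
      -subLap n (Ustd n) ξ = c * (Ustd n ξ) ^ ((Qh n + 2) / (Qh n - 2)) := by
  set a : ℝ := -(Qh n - 2) / 4 with ha
  have hnR : (0 : ℝ) < (n : ℝ) := by exact_mod_cast hn
  have han : a = -(n : ℝ) / 2 := by rw [ha]; unfold Qh; ring
  have hU : Ustd n = fun ξ => JL.ww n ξ ^ a := by
    funext ξ; rfl
  have hw : ContDiff ℝ (⊤ : ℕ∞) (JL.ww n) := by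
    unfold JL.ww JL.rr
    exact (((contDiff_const.add (ContDiff.sum fun i _ => (JL.LX n i).contDiff.pow 2)).add
      (ContDiff.sum fun i _ => (JL.LY n i).contDiff.pow 2)).pow 2).add
      ((JL.LT n).contDiff.pow 2)
  refine ⟨?_, ?_, 4 * (n : ℝ) ^ 2, by positivity, ?_⟩
  · rw [hU, contDiff_iff_contDiffAt]
    intro ξ
    exact hw.contDiffAt.rpow_const_of_ne (JL.ww_ne ξ)
  · intro ξ
    rw [hU]
    exact Real.rpow_pos_of_pos (JL.ww_pos ξ) _
  · intro ξ
    rw [hU, JL.subLap_rpow a ξ]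
    have hexp : a * ((Qh n + 2) / (Qh n - 2)) = a - 1 := by
      rw [han]; unfold Qh; have hn0 : (n:ℝ) ≠ 0 := hnR.ne'; rw [show (2*(n:ℝ)+2-2) = 2*n by ring, div_mul_div_comm, div_eq_iff (mul_ne_zero two_ne_zero (mul_ne_zero two_ne_zero hn0))]; ring
    have hrhs : (JL.ww n ξ ^ a) ^ ((Qh n + 2) / (Qh n - 2)) = JL.ww n ξ ^ (a - 1) := by
      rw [← Real.rpow_mul (JL.ww_pos ξ).le, hexp]
    rw [hrhs, han]
    ring


end
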